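/- Let 𝒜 be a finite nonempty set of attributes, each a function a : X → [0,1] on a set X of instances, and let μ be a monotone measure on 𝒜. Then for all x, y ∈ X, the Choquet similarity and the Choquet distance with respect to the dual measure satisfy R^μ(x, y) = μ(𝒜) − d^{μ̄}(x, y). -/
import Mathlib


open Finset

/-- The set `{x*_k, …, x*_{n-1}}` (0-indexed): the image under the enumeration `e`
of the indices `≥ k`. -/
def upSet {X : Type*} [DecidableEq X] {n : ℕ} (e : Fin n ≃ X) (k : ℕ) : Finset X :=
  (Finset.univ.filter fun j : Fin n => k ≤ (j : ℕ)).image e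

/-- The Choquet integral of `f` with respect to the set function `μ`, computed via an
enumeration `e : Fin n ≃ X` (assumed to sort `f` nondecreasingly):
`∑ i, f(x*_i) · [μ(A*_i) − μ(A*_{i+1})]` where `A*_i = {x*_i, …, x*_{n-1}}`
(note `A*_n = ∅`, and `μ ∅ = 0` for a monotone measure). -/
def choquetSum {X : Type*} [DecidableEq X] {n : ℕ} (μ : Finset X → ℝ) (f : X → ℝ)
    (e : Fin n ≃ X) : ℝ :=
  ∑ i : Fin n, f (e i) * (μ (upSet e i) - μ (upSet e ((i : ℕ) + 1)))

/-- The dual measure `μ̄(A) := μ(X) − μ(X \ A)`. -/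
def dualMeasure {X : Type*} [Fintype X] [DecidableEq X] (μ : Finset X → ℝ) :
    Finset X → ℝ :=
  fun A => μ Finset.univ - μ (Finset.univ \ A)

lemma mem_upSet {X : Type*} [DecidableEq X] {n : ℕ} (e : Fin n ≃ X) (k : ℕ) (a : X) :
    a ∈ upSet e k ↔ k ≤ ((e.symm a : Fin n) : ℕ) := by
  simp only [upSet, Finset.mem_image, Finset.mem_filter, Finset.mem_univ, true_and]
  constructor
  · rintro ⟨j, hj, rfl⟩; simpa using hj
  · intro h; exact ⟨e.symm a, h, by simp⟩

lemma upSet_zero {X : Type*} [Fintype X] [DecidableEq X] {n : ℕ} (e : Fin n ≃ X) :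
    upSet e 0 = Finset.univ := by
  ext a; simp [mem_upSet]

lemma upSet_of_le {X : Type*} [DecidableEq X] {n : ℕ} (e : Fin n ≃ X) {k : ℕ} (hk : n ≤ k) :
    upSet e k = ∅ := by
  ext a; simp only [mem_upSet, Finset.notMem_empty, iff_false]
  exact fun h => absurd ((e.symm a).isLt) (by omega)

-- sorted uniqueness
lemma sorted_unique {n : ℕ} {u v : Fin n → ℝ} (σ : Equiv.Perm (Fin n)) (h : u = v ∘ σ)
    (hu : Monotone u) (hv : Monotone v) : u = v := by
  have h1 : Tuple.sort u = Equiv.refl _ := Tuple.sort_eq_refl_iff_monotone.2 hu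
  have h2 : Tuple.sort v = Equiv.refl _ := Tuple.sort_eq_refl_iff_monotone.2 hv
  have := Tuple.comp_perm_comp_sort_eq_comp_sort (σ := σ) (f := v)
  rw [← h, h1, h2] at this
  simpa using this

-- Abel summation with boundary term
lemma abel_aux (G M : ℕ → ℝ) (n : ℕ) :
    ∑ i ∈ Finset.range n, G i * (M i - M (i+1))
      + (if n = 0 then 0 else G (n-1) * M n)
    = ∑ i ∈ Finset.range n, (G i - if i = 0 then 0 else G (i-1)) * M i := by
  induction n with
  | zero => simp
  | succ m ih =>
    rw [Finset.sum_range_succ, Finset.sum_range_succ, ← ih]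
    by_cases hm : m = 0
    · subst hm; simp; ring
    · simp only [hm, if_false, Nat.succ_ne_zero, if_false, Nat.add_sub_cancel]
      ring

lemma abel (G M : ℕ → ℝ) (n : ℕ) (hM : M n = 0) :
    ∑ i ∈ Finset.range n, G i * (M i - M (i+1))
    = ∑ i ∈ Finset.range n, (G i - if i = 0 then 0 else G (i-1)) * M i := by
  have := abel_aux G M n
  rcases Nat.eq_zero_or_pos n with h | h
  · subst h; simp
  · rw [if_neg (by omega), hM, mul_zero, add_zero] at this; exact this

-- canonical level set
lemma upSet_canonical {X : Type*} [Fintype X] [DecidableEq X] {n : ℕ} (e : Fin n ≃ X)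
    (g : X → ℝ) (hg : Monotone fun i => g (e i)) (i : Fin n) (h0 : 0 < (i : ℕ))
    (hlt : g (e ⟨(i : ℕ) - 1, by omega⟩) < g (e i)) :
    upSet e i = Finset.univ.filter (fun a => g (e i) ≤ g a) := by
  ext a
  simp only [mem_upSet, Finset.mem_filter, Finset.mem_univ, true_and]
  constructor
  · intro h
    have := hg (a := i) (b := e.symm a) (by exact_mod_cast h)
    simpa using this
  · intro h
    by_contra hc
    push_neg at hc
    have hle : ((e.symm a : Fin n) : ℕ) ≤ (i : ℕ) - 1 := by omega
    have := hg (a := e.symm a) (b := ⟨(i : ℕ) - 1, by omega⟩) (by exact_mod_cast hle)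
    simp only [Equiv.apply_symm_apply] at this
    linarith

lemma choquetSum_eq_range {X : Type*} [DecidableEq X] {n : ℕ} (ν : Finset X → ℝ)
    (g : X → ℝ) (e : Fin n ≃ X) :
    choquetSum ν g e = ∑ i ∈ Finset.range n,
      (if h : i < n then g (e ⟨i, h⟩) else 0) * (ν (upSet e i) - ν (upSet e (i+1))) := by
  rw [choquetSum, ← Fin.sum_univ_eq_sum_range]
  refine Finset.sum_congr rfl fun i _ => ?_
  rw [dif_pos i.isLt]

lemma choquet_invariance {X : Type*} [Fintype X] [DecidableEq X] {n : ℕ}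
    (ν : Finset X → ℝ) (hν : ν ∅ = 0) (g : X → ℝ) (e e' : Fin n ≃ X)
    (he : Monotone fun i => g (e i)) (he' : Monotone fun i => g (e' i)) :
    choquetSum ν g e = choquetSum ν g e' := by
  set G : ℕ → ℝ := fun k => if h : k < n then g (e ⟨k, h⟩) else 0 with hG
  set G' : ℕ → ℝ := fun k => if h : k < n then g (e' ⟨k, h⟩) else 0 with hG'
  have hGG : G = G' := by
    have hu : (fun i : Fin n => g (e i)) = fun i => g (e' i) := by
      apply sorted_unique (σ := e.trans e'.symm) _ he he'
      funext i
      simp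
    funext k
    by_cases h : k < n
    · simp only [hG, hG', dif_pos h]
      exact congrFun hu ⟨k, h⟩
    · simp [hG, hG', h]
  rw [choquetSum_eq_range, choquetSum_eq_range,
    abel G (fun k => ν (upSet e k)) n (by show ν (upSet e n) = 0; rw [upSet_of_le e le_rfl, hν]),
    abel G' (fun k => ν (upSet e' k)) n (by show ν (upSet e' n) = 0; rw [upSet_of_le e' le_rfl, hν])]
  refine Finset.sum_congr rfl fun i hi => ?_
  rw [Finset.mem_range] at hi
  rw [← hGG]
  by_cases h0 : i = 0
  · subst h0; rw [upSet_zero, upSet_zero]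
  · by_cases hc : G i - G (i-1) = 0
    · rw [if_neg h0, hc, zero_mul, zero_mul]
    · have hin : i - 1 < n := by omega
      have hmono : G (i-1) ≤ G i := by
        simp only [hG, dif_pos hi, dif_pos hin]
        exact he (show (⟨i-1, hin⟩ : Fin n) ≤ ⟨i, hi⟩ from Fin.mk_le_mk.2 (by omega))
      have hlt : G (i-1) < G i := lt_of_le_of_ne hmono (fun h => hc (by rw [h]; ring))
      have h1 : upSet e i = Finset.univ.filter (fun a => g (e ⟨i, hi⟩) ≤ g a) := by
        have := upSet_canonical e g he ⟨i, hi⟩ (by simpa using Nat.pos_of_ne_zero h0) ?_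
        · simpa using this
        · simpa only [hG, dif_pos hi, dif_pos hin] using hlt
      have h2 : upSet e' i = Finset.univ.filter (fun a => g (e' ⟨i, hi⟩) ≤ g a) := by
        have hlt' : G' (i-1) < G' i := by rwa [← hGG]
        have := upSet_canonical e' g he' ⟨i, hi⟩ (by simpa using Nat.pos_of_ne_zero h0) ?_
        · simpa using this
        · simpa only [hG', dif_pos hi, dif_pos hin] using hlt'
      have hval : g (e ⟨i, hi⟩) = g (e' ⟨i, hi⟩) := by
        have := congrFun hGG i
        simpa only [hG, hG', dif_pos hi] using this
      rw [h1, h2, hval]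

lemma compl_upSet_rev {X : Type*} [Fintype X] [DecidableEq X] {n : ℕ} (e : Fin n ≃ X)
    (k : ℕ) :
    Finset.univ \ upSet (Fin.revPerm.trans e) k = upSet e (n - k) := by
  ext a
  simp only [Finset.mem_sdiff, Finset.mem_univ, true_and, mem_upSet, Equiv.symm_trans_apply]
  have hm : ((e.symm a : Fin n) : ℕ) < n := (e.symm a).isLt
  have : ((Fin.revPerm.symm (e.symm a) : Fin n) : ℕ) = n - 1 - ((e.symm a : Fin n) : ℕ) := by
    simp [Fin.val_rev]; omega
  rw [this]
  omega


/-- For attributes `a : X → [0,1]` in a finite nonempty set `𝒜` and a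
monotone measure `μ` on `𝒜`, the Choquet similarity and Choquet distance satisfy
`R^μ(x,y) = μ(𝒜) − d^{μ̄}(x,y)`. Here the Choquet similarity
`R^μ(x,y) = ∫ (1 − |a(x) − a(y)|) dμ(a)` and the Choquet distance
`d^{μ̄}(x,y) = ∫ |a(x) − a(y)| dμ̄(a)` are Choquet integrals over the attributes. -/
theorem choquet_similarity_eq_measure_sub_dual_distance
    {I A : Type*} [Fintype A] [DecidableEq A] {n : ℕ} (hn : 0 < n)
    (val : A → I → ℝ) (hval : ∀ a x, val a x ∈ Set.Icc (0 : ℝ) 1)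
    (μ : Finset A → ℝ) (hμ_empty : μ ∅ = 0)
    (hμ_mono : ∀ S T : Finset A, S ⊆ T → μ S ≤ μ T)
    (x y : I)
    (e₁ : Fin n ≃ A) (hsort₁ : Monotone (fun i => 1 - |val (e₁ i) x - val (e₁ i) y|))
    (e₂ : Fin n ≃ A) (hsort₂ : Monotone (fun i => |val (e₂ i) x - val (e₂ i) y|)) :
    choquetSum μ (fun a => 1 - |val a x - val a y|) e₁ =
      μ Finset.univ - choquetSum (dualMeasure μ) (fun a => |val a x - val a y|) e₂ := by
  set g : A → ℝ := fun a => |val a x - val a y| with hg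
  set r : Fin n ≃ A := Fin.revPerm.trans e₁ with hr
  have hrmono : Monotone fun j => g (r j) := by
    intro j j' hjj
    have h1 : Fin.rev j' ≤ Fin.rev j := Fin.rev_le_rev.2 hjj
    have := hsort₁ h1
    simp only [hr, Equiv.trans_apply, Fin.revPerm_apply]
    dsimp only at this ⊢
    linarith
  -- split the similarity sum
  have key1 : choquetSum μ (fun a => 1 - g a) e₁ =
      μ Finset.univ - ∑ i : Fin n, g (e₁ i) * (μ (upSet e₁ i) - μ (upSet e₁ ((i : ℕ)+1))) := by
    rw [choquetSum]
    have htel : ∑ i : Fin n, (μ (upSet e₁ i) - μ (upSet e₁ ((i : ℕ)+1))) = μ Finset.univ := by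
      rw [Fin.sum_univ_eq_sum_range (fun k => μ (upSet e₁ k) - μ (upSet e₁ (k+1))),
        Finset.sum_range_sub' (fun k => μ (upSet e₁ k)), upSet_zero,
        upSet_of_le e₁ le_rfl, hμ_empty, sub_zero]
    rw [← htel]
    rw [← Finset.sum_sub_distrib]
    congr 1
    funext i
    ring
  have key2 : ∑ i : Fin n, g (e₁ i) * (μ (upSet e₁ i) - μ (upSet e₁ ((i : ℕ)+1)))
      = choquetSum (dualMeasure μ) g r := by
    rw [choquetSum]
    refine (Fintype.sum_equiv Fin.revPerm _ _ fun j => ?_).symm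
    have hda : ∀ k, dualMeasure μ (upSet r k) = μ Finset.univ - μ (upSet e₁ (n - k)) := by
      intro k
      rw [dualMeasure]
      rw [hr, compl_upSet_rev]
    rw [hda, hda]
    have h1 : n - ((j : ℕ) + 1) = ((Fin.rev j : Fin n) : ℕ) := by
      rw [Fin.val_rev]
    have h2 : n - (j : ℕ) = ((Fin.rev j : Fin n) : ℕ) + 1 := by
      rw [Fin.val_rev]; omega
    rw [h1, h2]
    have h3 : r j = e₁ (Fin.rev j) := by simp [hr]
    rw [h3]
    simp only [Fin.revPerm_apply]
    ring
  have key3 : choquetSum (dualMeasure μ) g r = choquetSum (dualMeasure μ) g e₂ := by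
    apply choquet_invariance _ _ g r e₂ hrmono hsort₂
    simp [dualMeasure]
  rw [key1, key2, key3]
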